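/- Let β > 0 and 0 < P₁ < 1. The binary F_β-measure F_β(e) = (1+β²)(P₁ − e₁)/((1+β²)P₁ + e₂ − e₁), viewed as a function of e = (e₁, e₂) ∈ ℝ², is pseudo-linear on the open convex half-plane {e ∈ ℝ² : (1+β²)P₁ − e₁ + e₂ > 0}. -/

import Mathlib

open RealInnerProductSpace

/-- A differentiable function `F` is pseudo-convex on `D` if for all `e, e' ∈ D`,
`F e > F e'` implies `⟪∇F e, e' - e⟫ < 0`. -/
def PseudoConvexOn {E : Type*} [NormedAddCommGroup E] [InnerProductSpace ℝ E]
    [CompleteSpace E] (D : Set E) (F : E → ℝ) : Prop :=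
  ∀ e ∈ D, ∀ e' ∈ D, F e > F e' → ⟪gradient F e, e' - e⟫ < 0

/-- `F` is pseudo-linear on `D` if both `F` and `-F` are pseudo-convex on `D`. -/
def PseudoLinearOn {E : Type*} [NormedAddCommGroup E] [InnerProductSpace ℝ E]
    [CompleteSpace E] (D : Set E) (F : E → ℝ) : Prop :=
  PseudoConvexOn D F ∧ PseudoConvexOn D (fun e => -F e)

/-- The binary `F_β`-measure `F_β(e) = (1+β²)(P₁ − e₁)/((1+β²)P₁ + e₂ − e₁)` is
pseudo-linear on the open half-plane where its denominator is positive. -/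
lemma inner_grad (β P₁ : ℝ) (e v : EuclideanSpace ℝ (Fin 2))
    (hD : (1 + β ^ 2) * P₁ + e 1 - e 0 ≠ 0) :
    ⟪gradient (fun e : EuclideanSpace ℝ (Fin 2) =>
        (1 + β ^ 2) * (P₁ - e 0) / ((1 + β ^ 2) * P₁ + e 1 - e 0)) e, v⟫
      = ((1 + β ^ 2) * (P₁ - e 0) * (-(((1 + β ^ 2) * P₁ + e 1 - e 0) ^ 2)⁻¹ * (v 1 - v 0))
          + ((1 + β ^ 2) * P₁ + e 1 - e 0)⁻¹ * ((1 + β ^ 2) * (0 - v 0))) := by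
  have hp0 : HasFDerivAt (𝕜 := ℝ) (fun x : EuclideanSpace ℝ (Fin 2) => x 0)
      (EuclideanSpace.proj 0) e := by
    simpa using (EuclideanSpace.proj (0 : Fin 2) :
      EuclideanSpace ℝ (Fin 2) →L[ℝ] ℝ).hasFDerivAt (x := e)
  have hp1 : HasFDerivAt (𝕜 := ℝ) (fun x : EuclideanSpace ℝ (Fin 2) => x 1)
      (EuclideanSpace.proj 1) e := by
    simpa using (EuclideanSpace.proj (1 : Fin 2) :
      EuclideanSpace ℝ (Fin 2) →L[ℝ] ℝ).hasFDerivAt (x := e)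
  have hN : HasFDerivAt (fun x : EuclideanSpace ℝ (Fin 2) => (1 + β ^ 2) * (P₁ - x 0))
      ((1 + β ^ 2) • ((0 : EuclideanSpace ℝ (Fin 2) →L[ℝ] ℝ) - EuclideanSpace.proj 0)) e :=
    ((hasFDerivAt_const P₁ e).sub hp0).const_mul (1 + β ^ 2)
  have hDd : HasFDerivAt (fun x : EuclideanSpace ℝ (Fin 2) => (1 + β ^ 2) * P₁ + x 1 - x 0)
      (((0 : EuclideanSpace ℝ (Fin 2) →L[ℝ] ℝ) + EuclideanSpace.proj 1) - EuclideanSpace.proj 0) e :=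
    ((hasFDerivAt_const ((1 + β ^ 2) * P₁) e).add hp1).sub hp0
  have hInv : HasFDerivAt (fun x : EuclideanSpace ℝ (Fin 2) =>
      ((1 + β ^ 2) * P₁ + x 1 - x 0)⁻¹)
      ((-(((1 + β ^ 2) * P₁ + e 1 - e 0) ^ 2)⁻¹) •
        (((0 : EuclideanSpace ℝ (Fin 2) →L[ℝ] ℝ) + EuclideanSpace.proj 1) - EuclideanSpace.proj 0)) e :=
    (hasDerivAt_inv hD).comp_hasFDerivAt e hDd
  have hF : HasFDerivAt (fun x : EuclideanSpace ℝ (Fin 2) =>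
      (1 + β ^ 2) * (P₁ - x 0) / ((1 + β ^ 2) * P₁ + x 1 - x 0))
      (((1 + β ^ 2) * (P₁ - e 0)) •
          ((-(((1 + β ^ 2) * P₁ + e 1 - e 0) ^ 2)⁻¹) •
            (((0 : EuclideanSpace ℝ (Fin 2) →L[ℝ] ℝ) + EuclideanSpace.proj 1) - EuclideanSpace.proj 0))
        + (((1 + β ^ 2) * P₁ + e 1 - e 0)⁻¹) •
            ((1 + β ^ 2) • ((0 : EuclideanSpace ℝ (Fin 2) →L[ℝ] ℝ) - EuclideanSpace.proj 0))) e := by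
    simpa only [div_eq_mul_inv, Pi.mul_def] using hN.mul hInv
  rw [gradient, InnerProductSpace.toDual_symm_apply, hF.fderiv]
  simp [EuclideanSpace.proj]

lemma inner_grad_neg {E : Type*} [NormedAddCommGroup E] [InnerProductSpace ℝ E]
    [CompleteSpace E] (F : E → ℝ) (e v : E) :
    ⟪gradient (fun x => -F x) e, v⟫ = -⟪gradient F e, v⟫ := by
  have h : gradient (fun x => -F x) e = -gradient F e := by
    rw [gradient, gradient, fderiv_fun_neg, map_neg]
  rw [h, inner_neg_left]


theorem binary_Fbeta_pseudoLinear (β P₁ : ℝ) (hβ : 0 < β)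
    (hP₁ : 0 < P₁) (hP₁' : P₁ < 1) :
    PseudoLinearOn
      {e : EuclideanSpace ℝ (Fin 2) | (1 + β ^ 2) * P₁ - e 0 + e 1 > 0}
      (fun e => (1 + β ^ 2) * (P₁ - e 0) / ((1 + β ^ 2) * P₁ + e 1 - e 0)) := by
  have key : ∀ e ∈ {e : EuclideanSpace ℝ (Fin 2) | (1 + β ^ 2) * P₁ - e 0 + e 1 > 0},
      ∀ e' ∈ {e : EuclideanSpace ℝ (Fin 2) | (1 + β ^ 2) * P₁ - e 0 + e 1 > 0},
      ⟪gradient (fun e : EuclideanSpace ℝ (Fin 2) =>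
          (1 + β ^ 2) * (P₁ - e 0) / ((1 + β ^ 2) * P₁ + e 1 - e 0)) e, e' - e⟫
        = ((1 + β ^ 2) * (P₁ - e' 0) * ((1 + β ^ 2) * P₁ + e 1 - e 0)
            - (1 + β ^ 2) * (P₁ - e 0) * ((1 + β ^ 2) * P₁ + e' 1 - e' 0))
          / ((1 + β ^ 2) * P₁ + e 1 - e 0) ^ 2 := by
    intro e he e' he'
    have hDe : (0:ℝ) < (1 + β ^ 2) * P₁ + e 1 - e 0 := by
      have := Set.mem_setOf_eq ▸ he; linarith
    rw [inner_grad β P₁ e (e' - e) (ne_of_gt hDe)]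
    have h0 : (e' - e) 0 = e' 0 - e 0 := rfl
    have h1 : (e' - e) 1 = e' 1 - e 1 := rfl
    rw [h0, h1]
    field_simp
    ring
  unfold PseudoLinearOn PseudoConvexOn
  constructor
  · intro e he e' he' hgt
    have hDe : (0:ℝ) < (1 + β ^ 2) * P₁ + e 1 - e 0 := by
      have := Set.mem_setOf_eq ▸ he; linarith
    have hDe' : (0:ℝ) < (1 + β ^ 2) * P₁ + e' 1 - e' 0 := by
      have := Set.mem_setOf_eq ▸ he'; linarith
    rw [key e he e' he']
    apply div_neg_of_neg_of_pos _ (by positivity)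
    rw [gt_iff_lt, div_lt_div_iff₀ hDe' hDe] at hgt
    nlinarith [hgt]
  · intro e he e' he' hgt
    have hDe : (0:ℝ) < (1 + β ^ 2) * P₁ + e 1 - e 0 := by
      have := Set.mem_setOf_eq ▸ he; linarith
    have hDe' : (0:ℝ) < (1 + β ^ 2) * P₁ + e' 1 - e' 0 := by
      have := Set.mem_setOf_eq ▸ he'; linarith
    rw [inner_grad_neg, key e he e' he']
    rw [neg_lt, neg_zero] -- goal: 0 < ...
    apply div_pos _ (by positivity)
    simp only [gt_iff_lt, neg_lt_neg_iff] at hgt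
    rw [div_lt_div_iff₀ hDe hDe'] at hgt
    nlinarith [hgt]
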